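/- Suppose a group G acts faithfully and uniformly equicontinuously on a metrizable uniform space X. The following are equivalent: (1) the action has small scale bounded orbits and the orbit map p : X → X/G (with X/G carrying the uniform structure generated by p) has complete fibers; (2) there exist a Mittag-Leffler inverse sequence of groups {G_i, ψ_{i+1}} with lim¹ G_i trivial, an inverse sequence of uniform spaces {X_i, φ_{i+1}}, and compatible actions of G_i on X_i that are uniformly properly discontinuous and neutral, together with a group isomorphism G ≅ lim G_i and a uniform equivalence X ≅ lim X_i under which the action of G on X corresponds to the coordinatewise action of lim G_i on lim X_i. -/

import Mathlib

open Filter Set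

universe u v

section Actions

variable (G : Type*) (X : Type*)

/-- The action of `G` on the uniform space `X` is neutral. -/
def IsNeutralAction [SMul G X] [UniformSpace X] : Prop :=
  ∀ E ∈ uniformity X, ∃ F ∈ uniformity X,
    ∀ (x y : X) (g : G), (x, g • y) ∈ F → ∃ h : G, (h • x, y) ∈ E

/-- `G_E`: the subgroup of `G` generated by the elements that move some point
of `X` within the entourage `E`. -/
def subgroupEnt [Group G] [MulAction G X] (E : Set (X × X)) : Subgroup G :=
  Subgroup.closure { g : G | ∃ x : X, (x, g • x) ∈ E }

/-- The action has small scale bounded orbits. -/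
def SmallScaleBoundedOrbits [Group G] [MulAction G X] [UniformSpace X] : Prop :=
  ∀ E ∈ uniformity X, ∃ F ∈ uniformity X,
    ∀ g ∈ subgroupEnt G X F, ∀ x : X, (x, g • x) ∈ E

/-- The action is uniformly properly discontinuous. -/
def UnifProperlyDisc [Group G] [SMul G X] [UniformSpace X] : Prop :=
  ∃ E₀ ∈ uniformity X, ∀ (g : G) (x : X), (x, g • x) ∈ E₀ → g = 1

/-- The action is faithful. -/
def FaithfulAction [Group G] [SMul G X] : Prop :=
  ∀ g : G, (∀ x : X, g • x = x) → g = 1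

/-- The action is uniformly equicontinuous. -/
def UnifEquicont [SMul G X] [UniformSpace X] : Prop :=
  ∀ E ∈ uniformity X, ∃ F ∈ uniformity X,
    ∀ (g : G) (x y : X), (x, y) ∈ F → (g • x, g • y) ∈ E

/-- The entourage `E` is `G`-invariant. -/
def InvariantEnt [SMul G X] (E : Set (X × X)) : Prop :=
  ∀ (g : G) (x y : X), (x, y) ∈ E → (g • x, g • y) ∈ E

end Actions

section Seq

variable {A : ℕ → Sort*}

/-- Composite of the bonding maps of an inverse sequence. -/
def seqComp (φ : ∀ i, A (i + 1) → A i) (n : ℕ) : ∀ k, A (n + k) → A n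
  | 0 => id
  | k + 1 => fun a => seqComp φ n k (φ (n + k) a)

/-- Composite bonding map `A m → A n` for `n ≤ m`. -/
def seqCompLE (φ : ∀ i, A (i + 1) → A i) {n m : ℕ} (h : n ≤ m) (a : A m) : A n :=
  seqComp φ n (m - n) (cast (congrArg A (Nat.add_sub_cancel' h).symm) a)

end Seq

/-- The inverse limit of an inverse sequence (it carries the inverse limit
uniformity when the terms are uniform spaces). -/
abbrev seqLim {A : ℕ → Type*} (φ : ∀ i, A (i + 1) → A i) : Type _ :=
  { x : ∀ i, A i // ∀ i, φ i (x (i + 1)) = x i }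

/-- The Mittag-Leffler condition for an inverse sequence:
the decreasing images in each term are eventually constant. -/
def SeqMittagLeffler {A : ℕ → Type*} (φ : ∀ i, A (i + 1) → A i) : Prop :=
  ∀ n : ℕ, ∃ m : ℕ, ∃ hnm : n ≤ m, ∀ k (hk : m ≤ k),
    Set.range (seqCompLE φ (hnm.trans hk)) = Set.range (seqCompLE φ hnm)

/-- `lim¹` of an inverse sequence of groups is trivial: the difference map
`(h_i) ↦ (h_i · ψ_i(h_{i+1})⁻¹)` on the product is surjective. -/
def Lim1Trivial {Gs : ℕ → Type*} [∀ i, Group (Gs i)]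
    (ψ : ∀ i, Gs (i + 1) →* Gs i) : Prop :=
  Function.Surjective (fun h : ∀ i, Gs i => fun i => h i * (ψ i (h (i + 1)))⁻¹)

/-- The inverse limit of an inverse sequence of groups,
as the subgroup of threads of the product group. -/
def seqLimG {Gs : ℕ → Type*} [∀ i, Group (Gs i)] (ψ : ∀ i, Gs (i + 1) →* Gs i) :
    Subgroup (∀ i, Gs i) where
  carrier := { g | ∀ i, ψ i (g (i + 1)) = g i }
  one_mem' := by intro i; simp
  mul_mem' := by intro a b ha hb i; simp only [Pi.mul_apply, map_mul, ha i, hb i]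
  inv_mem' := by intro a ha i; simp only [Pi.inv_apply, map_inv, ha i]

/-- The data expressing the action of `G` on `X` as the inverse limit of
uniformly properly discontinuous and neutral compatible actions along a
Mittag-Leffler inverse sequence of groups with trivial `lim¹`. -/
structure ActionSeqData (G : Type u) [Group G] (X : Type v) [UniformSpace X]
    [MulAction G X] : Type (max u v + 1) where
  Gs : ℕ → Type u
  [instG : ∀ i, Group (Gs i)]
  ψ : ∀ i, Gs (i + 1) →* Gs i
  Xs : ℕ → Type v
  [instX : ∀ i, UniformSpace (Xs i)]
  φ : ∀ i, Xs (i + 1) → Xs i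
  φuc : ∀ i, UniformContinuous (φ i)
  [instA : ∀ i, MulAction (Gs i) (Xs i)]
  compat : ∀ i (g : Gs (i + 1)) (x : Xs (i + 1)), φ i (g • x) = ψ i g • φ i x
  ml : SeqMittagLeffler (fun i => ⇑(ψ i))
  lim1 : Lim1Trivial ψ
  upd : ∀ i, UnifProperlyDisc (Gs i) (Xs i)
  neutral : ∀ i, IsNeutralAction (Gs i) (Xs i)
  eG : G ≃* ↥(seqLimG ψ)
  eX : X ≃ᵤ seqLim φ
  equivariant : ∀ (g : G) (x : X) (i : ℕ),
    (eX (g • x)).1 i = ((eG g : ∀ j, Gs j) i) • (eX x).1 i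


set_option linter.unusedSectionVars false
set_option maxHeartbeats 1000000

namespace ASD


variable {G : Type u} [Group G] {X : Type v} [UniformSpace X] [MulAction G X]

/-- A "nice" entourage: invariant, closed, symmetric. -/
def Nice (G : Type u) [Group G] (X : Type v) [UniformSpace X] [MulAction G X]
    (S : Set (X × X)) : Prop :=
  S ∈ uniformity X ∧ InvariantEnt G X S ∧ IsClosed S ∧ ∀ p ∈ S, Prod.swap p ∈ S

theorem smul_uc (hue : UnifEquicont G X) (g : G) :
    UniformContinuous (fun x : X => g • x) := by
  intro E hE
  obtain ⟨F, hF, h⟩ := hue E hE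
  apply Filter.mem_map.2
  exact mem_of_superset hF (fun p hp => h g p.1 p.2 hp)

theorem exists_nice (hue : UnifEquicont G X) {E : Set (X × X)} (hE : E ∈ uniformity X) :
    ∃ D, Nice G X D ∧ D ⊆ E := by
  obtain ⟨C, hC, hCc, hCE⟩ := mem_uniformity_isClosed hE
  set E' : Set (X × X) := {p : X × X | ∀ g : G, (g • p.1, g • p.2) ∈ C} with hE'def
  have hE'mem : E' ∈ uniformity X := by
    obtain ⟨F, hF, h⟩ := hue C hC
    exact mem_of_superset hF (fun p hp g => h g p.1 p.2 hp)
  have hE'inv : InvariantEnt G X E' := by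
    intro g x y hxy g'
    have := hxy (g' * g)
    simpa [mul_smul] using this
  have hE'closed : IsClosed E' := by
    have : E' = ⋂ g : G, (fun p : X × X => (g • p.1, g • p.2)) ⁻¹' C := by
      ext p; simp [hE'def]
    rw [this]
    refine isClosed_iInter (fun g => IsClosed.preimage ?_ hCc)
    exact Continuous.prodMk
      (((smul_uc hue g).continuous).comp continuous_fst)
      (((smul_uc hue g).continuous).comp continuous_snd)
  have hE'E : E' ⊆ E := fun p hp => hCE (by simpa using hp 1)
  refine ⟨E' ∩ Prod.swap ⁻¹' E', ⟨?_, ?_, ?_, ?_⟩, fun p hp => hE'E hp.1⟩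
  · exact inter_mem hE'mem (symm_le_uniformity hE'mem)
  · intro g x y hxy
    exact ⟨hE'inv g x y hxy.1, hE'inv g y x hxy.2⟩
  · exact hE'closed.inter (hE'closed.preimage continuous_swap)
  · intro p hp
    exact ⟨hp.2, hp.1⟩


theorem subgroupEnt_mono {S T : Set (X × X)} (h : S ⊆ T) :
    subgroupEnt G X S ≤ subgroupEnt G X T :=
  Subgroup.closure_mono (fun g ⟨x, hx⟩ => ⟨x, h hx⟩)

theorem step (hue : UnifEquicont G X) (hss : SmallScaleBoundedOrbits G X)
    {S : Set (X × X)} (hS : S ∈ uniformity X) {B : Set (X × X)} (hB : B ∈ uniformity X) :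
    ∃ T, Nice G X T ∧ T ⊆ S ∧ T ⊆ B ∧ SetRel.comp T T ⊆ S ∧
      (∀ g ∈ subgroupEnt G X T, ∀ x : X, (x, g • x) ∈ S) := by
  obtain ⟨F, hF, hFs⟩ := hss S hS
  obtain ⟨W, hW, hWs⟩ := comp_mem_uniformity_sets hS
  obtain ⟨T, hT, hTsub⟩ :=
    exists_nice hue (inter_mem (inter_mem (inter_mem hS hB) hF) hW)
  refine ⟨T, hT, fun p hp => (hTsub hp).1.1.1, fun p hp => (hTsub hp).1.1.2, ?_, ?_⟩
  · exact subset_trans (SetRel.comp_subset_comp (fun p hp => (hTsub hp).2) (fun p hp => (hTsub hp).2)) hWs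
  · intro g hg x
    exact hFs g (subgroupEnt_mono (fun p hp => (hTsub hp).1.2) hg) x

variable (hue : UnifEquicont G X) (hss : SmallScaleBoundedOrbits G X)
  (B : ℕ → Set (X × X)) (hB : ∀ n, B n ∈ uniformity X)

noncomputable def chain : ℕ → {S : Set (X × X) // Nice G X S}
  | 0 => ⟨(exists_nice hue univ_mem).choose, (exists_nice hue univ_mem).choose_spec.1⟩
  | n+1 => ⟨(step hue hss (chain n).2.1 (hB n)).choose,
      (step hue hss (chain n).2.1 (hB n)).choose_spec.1⟩

def DD (n : ℕ) : Set (X × X) := (chain hue hss B hB n).1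

theorem DD_nice (n : ℕ) : Nice G X (DD hue hss B hB n) := (chain hue hss B hB n).2

theorem DD_mem (n : ℕ) : DD hue hss B hB n ∈ uniformity X := (DD_nice hue hss B hB n).1

theorem DD_succ (n : ℕ) :
    DD hue hss B hB (n+1) ⊆ DD hue hss B hB n ∧ DD hue hss B hB (n+1) ⊆ B n ∧
    SetRel.comp (DD hue hss B hB (n+1)) (DD hue hss B hB (n+1)) ⊆ DD hue hss B hB n ∧
    (∀ g ∈ subgroupEnt G X (DD hue hss B hB (n+1)), ∀ x : X, (x, g • x) ∈ DD hue hss B hB n) := by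
  have h := (step hue hss (chain hue hss B hB n).2.1 (hB n)).choose_spec
  exact ⟨h.2.1, h.2.2.1, h.2.2.2.1, h.2.2.2.2⟩


/-- The orbit space of the action of a subgroup `N ≤ G` on `X`. -/
def orbQuot (N : Subgroup G) : Type v := Quotient (MulAction.orbitRel N X)

/-- Projection onto the orbit space. -/
def qmap (N : Subgroup G) : X → orbQuot (X := X) N := Quotient.mk''

theorem qmap_surj (N : Subgroup G) : Function.Surjective (qmap (X := X) N) :=
  Quotient.mk''_surjective

theorem qmap_eq {N : Subgroup G} {x y : X} :
    qmap N x = qmap N y ↔ ∃ m : ↥N, (m : G) • y = x := by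
  change (Quotient.mk'' x : Quotient (MulAction.orbitRel N X)) = Quotient.mk'' y ↔ _
  rw [Quotient.eq'', MulAction.orbitRel_apply, MulAction.mem_orbit_iff]
  rfl

theorem qmap_smul_eq {N : Subgroup G} (m : ↥N) (x : X) :
    qmap N ((m : G) • x) = qmap N x := qmap_eq.2 ⟨m, rfl⟩

/-- The `G ⧸ N`-action on the orbit space. -/
def orbSMul (N : Subgroup G) [N.Normal] : G ⧸ N → orbQuot (X := X) N → orbQuot (X := X) N :=
  fun gq xq => Quotient.liftOn₂' gq xq (fun g x => qmap N (g • x)) (by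
    intro a₁ b₁ a₂ b₂ ha hb
    have ha' : a₁⁻¹ * a₂ ∈ N := (QuotientGroup.leftRel_apply).1 ha
    obtain ⟨m, hm⟩ : ∃ m : ↥N, (m : G) • b₂ = b₁ := by
      rw [MulAction.orbitRel_apply, MulAction.mem_orbit_iff] at hb
      exact hb
    apply qmap_eq.2
    have h1 : a₁ * (m : G) * a₁⁻¹ ∈ N := Subgroup.Normal.conj_mem ‹N.Normal› _ m.2 a₁
    have h2 : a₂ * a₁⁻¹ ∈ N := by
      have := Subgroup.Normal.conj_mem ‹N.Normal› _ ha' a₁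
      simpa [mul_assoc] using this
    have h3 : a₁ * (m : G) * a₂⁻¹ ∈ N := by
      have := N.mul_mem h1 (N.inv_mem h2)
      simpa [mul_assoc] using this
    refine ⟨⟨a₁ * (m : G) * a₂⁻¹, h3⟩, ?_⟩
    show (a₁ * (m : G) * a₂⁻¹) • (a₂ • b₂) = a₁ • b₁
    rw [← hm]
    simp [mul_smul])

theorem orbSMul_mk (N : Subgroup G) [N.Normal] (g : G) (x : X) :
    orbSMul N (QuotientGroup.mk g) (qmap N x) = qmap N (g • x) := rfl

/-- The action of `G ⧸ N` on the orbit space. -/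
def orbAction (N : Subgroup G) [N.Normal] : MulAction (G ⧸ N) (orbQuot (X := X) N) where
  smul := orbSMul N
  one_smul := by
    intro xq
    induction xq using Quotient.inductionOn' with
    | h x =>
      show orbSMul N (QuotientGroup.mk 1) (qmap N x) = qmap N x
      rw [orbSMul_mk, one_smul]
  mul_smul := by
    intro gq hq xq
    induction gq using Quotient.inductionOn' with
    | h g =>
      induction hq using Quotient.inductionOn' with
      | h h =>
        induction xq using Quotient.inductionOn' with
        | h x =>
          show orbSMul N (QuotientGroup.mk (g * h)) (qmap N x)
            = orbSMul N (QuotientGroup.mk g) (orbSMul N (QuotientGroup.mk h) (qmap N x))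
          rw [orbSMul_mk, orbSMul_mk, orbSMul_mk, mul_smul]

/-- The map between orbit spaces induced by an inclusion of subgroups. -/
def qdrop {N M : Subgroup G} (h : N ≤ M) : orbQuot (X := X) N → orbQuot (X := X) M :=
  Quotient.lift (qmap M) (by
    intro a b hab
    have : a ∈ MulAction.orbit N b := hab
    rw [MulAction.mem_orbit_iff] at this
    obtain ⟨m, hm⟩ := this
    exact qmap_eq.2 ⟨⟨(m : G), h m.2⟩, hm⟩)

theorem qdrop_mk {N M : Subgroup G} (h : N ≤ M) (x : X) :
    qdrop (X := X) h (qmap N x) = qmap M x := rfl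

/-- The uniform structure on the orbit space. -/
noncomputable def orbUS (hue : UnifEquicont G X) (N : Subgroup G) :
    UniformSpace (orbQuot (X := X) N) :=
  UniformSpace.ofCore (UniformSpace.Core.mk'
    (Filter.map (Prod.map (qmap N) (qmap N)) (uniformity X))
    (by
      intro r hr a
      induction a using Quotient.inductionOn' with
      | h x =>
        have : (x, x) ∈ Prod.map (qmap N) (qmap N) ⁻¹' r :=
          refl_mem_uniformity (Filter.mem_map.1 hr)
        exact this)
    (by
      intro r hr
      rw [Filter.mem_map] at hr ⊢
      have : (Prod.map (qmap N) (qmap N)) ⁻¹' (Prod.swap ⁻¹' r)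
          = Prod.swap ⁻¹' ((Prod.map (qmap N) (qmap N)) ⁻¹' r) := rfl
      rw [this]
      exact symm_le_uniformity hr)
    (by
      intro r hr
      have hE : Prod.map (qmap N) (qmap N) ⁻¹' r ∈ uniformity X := Filter.mem_map.1 hr
      obtain ⟨V, hV, hVr⟩ := comp_mem_uniformity_sets hE
      obtain ⟨W, hW, hWV⟩ := exists_nice hue hV
      refine ⟨Prod.map (qmap N) (qmap N) '' W, Filter.image_mem_map hW.1, ?_⟩
      rintro ⟨a, c⟩ ⟨b, hab, hbc⟩
      obtain ⟨⟨x, y₁⟩, hxy₁, hq1⟩ := hab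
      obtain ⟨⟨y₂, z⟩, hy₂z, hq2⟩ := hbc
      have hb : qmap N y₁ = qmap N y₂ := by
        have e1 := congrArg Prod.snd hq1
        have e2 := congrArg Prod.fst hq2
        simp only [Prod.map] at e1 e2
        rw [show qmap N y₁ = b from e1, show qmap N y₂ = b from e2]
      obtain ⟨m, hm⟩ := qmap_eq.1 hb
      have hxy₂ : ((m : G)⁻¹ • x, y₂) ∈ W := by
        have := hW.2.1 (m : G)⁻¹ x y₁ hxy₁
        rw [← hm] at this
        simpa using this
      have hxz : ((m : G)⁻¹ • x, z) ∈ Prod.map (qmap N) (qmap N) ⁻¹' r :=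
        hVr ⟨y₂, hWV hxy₂, hWV hy₂z⟩
      have : (qmap N ((m : G)⁻¹ • x), qmap N z) ∈ r := hxz
      have hfix : qmap N x = qmap N ((m : G)⁻¹ • x) := qmap_eq.2 ⟨m, by simp⟩
      simp only [Prod.map, Prod.mk.injEq] at hq1 hq2
      rw [← hfix] at this
      rwa [hq1.1, hq2.2] at this))

theorem mem_orbUnif (hue : UnifEquicont G X) (N : Subgroup G) {S : Set (orbQuot (X := X) N × orbQuot (X := X) N)} :
    S ∈ @uniformity _ (orbUS (X := X) hue N) ↔ Prod.map (qmap N) (qmap N) ⁻¹' S ∈ uniformity X :=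
  Iff.rfl

theorem image_mem_orbUnif (hue : UnifEquicont G X) (N : Subgroup G) {E : Set (X × X)}
    (hE : E ∈ uniformity X) :
    Prod.map (qmap N) (qmap N) '' E ∈ @uniformity _ (orbUS (X := X) hue N) :=
  Filter.image_mem_map hE


theorem gen_mem {D : Set (X × X)} {g : G} {x : X} (h : (x, g • x) ∈ D) :
    g ∈ subgroupEnt G X D := Subgroup.subset_closure ⟨x, h⟩

theorem subgroupEnt_normal {D : Set (X × X)} (hD : InvariantEnt G X D) :
    (subgroupEnt G X D).Normal := by
  constructor
  intro n hn g
  have hmap : (subgroupEnt G X D).map (MulAut.conj g).toMonoidHom ≤ subgroupEnt G X D := by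
    rw [subgroupEnt, MonoidHom.map_closure]
    refine (Subgroup.closure_le _).2 ?_
    rintro k ⟨k₀, ⟨x, hx⟩, rfl⟩
    refine Subgroup.subset_closure ⟨g • x, ?_⟩
    have := hD g x (k₀ • x) hx
    simpa [mul_smul] using this
  exact hmap ⟨n, hn, rfl⟩

theorem upd_level (hue : UnifEquicont G X) {D : Set (X × X)} (hD : Nice G X D)
    (N : Subgroup G) [N.Normal] (hND : ∀ (g : G) (x : X), (x, g • x) ∈ D → g ∈ N) :
    @UnifProperlyDisc (G ⧸ N) (orbQuot (X := X) N) _ (orbAction (X := X) N).toSMul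
      (orbUS hue N) := by
  refine ⟨Prod.map (qmap N) (qmap N) '' D, image_mem_orbUnif hue N hD.1, ?_⟩
  intro gq xq hmem
  induction gq using Quotient.inductionOn' with
  | h g =>
    induction xq using Quotient.inductionOn' with
    | h x =>
      obtain ⟨⟨u, v⟩, huv, heq⟩ := hmem
      simp only [Prod.map, Prod.mk.injEq] at heq
      replace heq := Prod.ext_iff.1 heq
      obtain ⟨m, hm⟩ := qmap_eq.1 heq.1
      have heq2 : qmap N v = qmap N (g • x) := heq.2
      obtain ⟨k, hk⟩ := qmap_eq.1 heq2
      have hmove : (x, ((m : G)⁻¹ * (k : G) * g) • x) ∈ D := by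
        have := hD.2.1 (m : G)⁻¹ u v huv
        rw [← hm, ← hk] at this
        simpa [mul_smul] using this
      have hgN : g ∈ N := by
        have h1 : (m : G)⁻¹ * (k : G) * g ∈ N := hND _ x hmove
        have h2 : (k : G)⁻¹ * (m : G) * ((m : G)⁻¹ * (k : G) * g) ∈ N :=
          N.mul_mem (N.mul_mem (N.inv_mem k.2) m.2) h1
        simpa [mul_assoc] using h2
      show QuotientGroup.mk g = 1
      exact (QuotientGroup.eq_one_iff g).2 hgN

theorem neutral_level (hue : UnifEquicont G X) (N : Subgroup G) [N.Normal] :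
    @IsNeutralAction (G ⧸ N) (orbQuot (X := X) N) (orbAction (X := X) N).toSMul
      (orbUS hue N) := by
  intro S hS
  have hE : Prod.map (qmap N) (qmap N) ⁻¹' S ∈ uniformity X := hS
  obtain ⟨W, hW, hWE⟩ := exists_nice hue hE
  refine ⟨Prod.map (qmap N) (qmap N) '' W, image_mem_orbUnif hue N hW.1, ?_⟩
  intro xq yq gq hmem
  induction yq using Quotient.inductionOn' with
  | h y =>
    induction gq using Quotient.inductionOn' with
    | h g =>
      obtain ⟨⟨u, v⟩, huv, heq⟩ := hmem
      simp only [Prod.map, Prod.mk.injEq] at heq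
      have heq2 : qmap N v = qmap N (g • y) := heq.2
      obtain ⟨k, hk⟩ := qmap_eq.1 heq2
      refine ⟨QuotientGroup.mk (((k : G) * g)⁻¹), ?_⟩
      have hpair : ((((k : G) * g)⁻¹) • u, y) ∈ W := by
        have := hW.2.1 (((k : G) * g)⁻¹) u v huv
        rw [← hk] at this
        simpa [mul_smul] using this
      have : (qmap N ((((k : G) * g)⁻¹) • u), qmap N y) ∈ S := hWE hpair
      show (orbSMul N (QuotientGroup.mk (((k : G) * g)⁻¹)) xq, _) ∈ S
      rw [← heq.1]
      exact this

theorem qdrop_uc (hue : UnifEquicont G X) {N M : Subgroup G} (h : N ≤ M) :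
    @UniformContinuous _ _ (orbUS (X := X) hue N) (orbUS (X := X) hue M) (qdrop h) := by
  show Filter.Tendsto _ _ _
  have key : Filter.map (Prod.map (qdrop (X := X) h) (qdrop h))
        (Filter.map (Prod.map (qmap N) (qmap N)) (uniformity X))
      = Filter.map (Prod.map (qmap M) (qmap M)) (uniformity X) := by
    rw [Filter.map_map]
    rfl
  exact le_of_eq key

theorem qdrop_smul {N M : Subgroup G} [N.Normal] [M.Normal] (h : N ≤ M)
    (hc : N ≤ Subgroup.comap (MonoidHom.id G) M) (gq : G ⧸ N) (xq : orbQuot (X := X) N) :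
    qdrop (X := X) h (orbSMul N gq xq)
      = orbSMul M (QuotientGroup.map N M (MonoidHom.id G) hc gq) (qdrop h xq) := by
  induction gq using Quotient.inductionOn' with
  | h g =>
    induction xq using Quotient.inductionOn' with
    | h x =>
      rfl

variable (hBb : ∀ E ∈ uniformity X, ∃ n, B n ⊆ E)

/-! ### The tower of normal subgroups -/

theorem DD_antitone {n m : ℕ} (h : n ≤ m) :
    DD hue hss B hB m ⊆ DD hue hss B hB n := by
  induction m, h using Nat.le_induction with
  | base => exact subset_rfl
  | succ m hm ih => exact subset_trans (DD_succ hue hss B hB m).1 ih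

theorem DD_comp (n : ℕ) :
    SetRel.comp (DD hue hss B hB (n+1)) (DD hue hss B hB (n+1)) ⊆ DD hue hss B hB n :=
  (DD_succ hue hss B hB n).2.2.1

theorem DD_basis (hBb : ∀ E ∈ uniformity X, ∃ n, B n ⊆ E) :
    ∀ E ∈ uniformity X, ∃ n, DD hue hss B hB n ⊆ E := by
  intro E hE
  obtain ⟨n, hn⟩ := hBb E hE
  exact ⟨n+1, subset_trans (DD_succ hue hss B hB n).2.1 hn⟩

theorem eq_of_DD [T0Space X] (hBb : ∀ E ∈ uniformity X, ∃ n, B n ⊆ E) {x y : X}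
    (h : ∀ n, (x, y) ∈ DD hue hss B hB n) : x = y := by
  refine eq_of_uniformity ?_
  intro V hV
  obtain ⟨n, hn⟩ := DD_basis hue hss B hB hBb V hV
  exact hn (h n)

/-- The tower of normal subgroups of `G`. -/
def NN (n : ℕ) : Subgroup G :=
  Subgroup.normalClosure {g : G | ∃ x : X, (x, g • x) ∈ DD hue hss B hB n}

theorem NN_eq (n : ℕ) : NN hue hss B hB n = subgroupEnt G X (DD hue hss B hB n) := by
  haveI := subgroupEnt_normal (X := X) (DD_nice hue hss B hB n).2.1
  refine le_antisymm (Subgroup.normalClosure_le_normal Subgroup.subset_closure) ?_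
  exact (Subgroup.closure_le _).2 Subgroup.subset_normalClosure

theorem NN_succ_le (n : ℕ) : NN hue hss B hB (n+1) ≤ NN hue hss B hB n := by
  rw [NN_eq, NN_eq]
  exact subgroupEnt_mono (DD_succ hue hss B hB n).1

theorem NN_antitone {n m : ℕ} (h : n ≤ m) : NN hue hss B hB m ≤ NN hue hss B hB n := by
  rw [NN_eq, NN_eq]
  exact subgroupEnt_mono (DD_antitone hue hss B hB h)

theorem NN_move {g : G} {n : ℕ} (hg : g ∈ NN hue hss B hB (n+1)) (x : X) :
    (x, g • x) ∈ DD hue hss B hB n := by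
  rw [NN_eq] at hg
  exact (DD_succ hue hss B hB n).2.2.2 g hg x

theorem mem_NN {g : G} {n : ℕ} {x : X} (h : (x, g • x) ∈ DD hue hss B hB n) :
    g ∈ NN hue hss B hB n := by
  rw [NN_eq]
  exact gen_mem h

/-! ### A key convergence lemma -/

theorem key_lim (hBb : ∀ E ∈ uniformity X, ∃ n, B n ⊆ E)
    (hcomp : ∀ x : X, IsComplete (MulAction.orbit G x))
    (z : ℕ → X) (x0 : X) (horb : ∀ n, z n ∈ MulAction.orbit G x0)
    (hstep : ∀ n m, n ≤ m → (z n, z m) ∈ DD hue hss B hB n) :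
    ∃ y ∈ MulAction.orbit G x0, (∀ n, (z n, y) ∈ DD hue hss B hB n) := by
  have hDDsymm : ∀ (n : ℕ) (p : X × X), p ∈ DD hue hss B hB n →
      Prod.swap p ∈ DD hue hss B hB n := fun n p hp => (DD_nice hue hss B hB n).2.2.2 p hp
  have hcs : CauchySeq z := by
    rw [cauchySeq_iff_tendsto, Filter.tendsto_def]
    intro V hV
    obtain ⟨i, hi⟩ := DD_basis hue hss B hB hBb V hV
    have hmem : {p : ℕ × ℕ | (i + 1, i + 1) ≤ p} ∈ (Filter.atTop : Filter (ℕ × ℕ)) :=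
      Filter.mem_atTop (i+1, i+1)
    refine Filter.mem_of_superset hmem ?_
    rintro ⟨m, k⟩ ⟨hm, hk⟩
    have h1 : (z (i+1), z m) ∈ DD hue hss B hB (i+1) := hstep (i+1) m hm
    have h2 : (z (i+1), z k) ∈ DD hue hss B hB (i+1) := hstep (i+1) k hk
    exact hi (DD_comp hue hss B hB i ⟨z (i+1), hDDsymm (i+1) _ h1, h2⟩)
  have hle : Filter.map z Filter.atTop ≤ Filter.principal (MulAction.orbit G x0) := by
    rw [Filter.le_principal_iff]
    exact Filter.mem_map.2 (Filter.mem_of_superset (Filter.mem_atTop 0) (fun n _ => horb n))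
  obtain ⟨y, hy, hylim⟩ := hcomp x0 (Filter.map z Filter.atTop) hcs hle
  refine ⟨y, hy, fun n => ?_⟩
  have hclosed : IsClosed {w : X | (z n, w) ∈ DD hue hss B hB n} :=
    IsClosed.preimage (Continuous.prodMk continuous_const continuous_id)
      (DD_nice hue hss B hB n).2.2.1
  have hev : ∀ᶠ m in Filter.atTop, z m ∈ {w : X | (z n, w) ∈ DD hue hss B hB n} :=
    Filter.eventually_atTop.2 ⟨n, fun m hm => hstep n m hm⟩
  exact hclosed.mem_of_tendsto hylim hev

/-! ### The group isomorphism -/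

theorem thread_rep (hBb : ∀ E ∈ uniformity X, ∃ n, B n ⊆ E) (hfaith : FaithfulAction G X)
    (hcomp : ∀ x : X, IsComplete (MulAction.orbit G x))
    (gs : ℕ → G) (hgs : ∀ n, (gs n)⁻¹ * gs (n+1) ∈ NN hue hss B hB n) :
    ∃ h : G, ∀ n, (gs n)⁻¹ * h ∈ NN hue hss B hB n := by
  rcases isEmpty_or_nonempty X with hX | hX
  · have hall : ∀ g : G, g = 1 := fun g => hfaith g (fun x => (hX.false x).elim)
    refine ⟨1, fun n => ?_⟩
    rw [hall (gs n)]
    simpa using (NN hue hss B hB n).one_mem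
  · obtain ⟨x0⟩ := hX
    have hchain : ∀ n m, n ≤ m → (gs n)⁻¹ * gs m ∈ NN hue hss B hB n := by
      intro n m h
      induction m, h using Nat.le_induction with
      | base => simpa using (NN hue hss B hB n).one_mem
      | succ m hm ih =>
        have h2 : (gs m)⁻¹ * gs (m+1) ∈ NN hue hss B hB n :=
          NN_antitone hue hss B hB hm (hgs m)
        have := (NN hue hss B hB n).mul_mem ih h2
        simpa [mul_assoc] using this
    set z : ℕ → X := fun n => gs (n+1) • x0 with hz
    have horb : ∀ n, z n ∈ MulAction.orbit G x0 := fun n => ⟨gs (n+1), rfl⟩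
    have hstep : ∀ n m, n ≤ m → (z n, z m) ∈ DD hue hss B hB n := by
      intro n m h
      have h1 : (gs (n+1))⁻¹ * gs (m+1) ∈ NN hue hss B hB (n+1) :=
        hchain (n+1) (m+1) (Nat.succ_le_succ h)
      have h2 : (x0, ((gs (n+1))⁻¹ * gs (m+1)) • x0) ∈ DD hue hss B hB n :=
        NN_move hue hss B hB h1 x0
      have h3 := (DD_nice hue hss B hB n).2.1 (gs (n+1)) _ _ h2
      simpa [hz, mul_smul] using h3
    obtain ⟨y, hy, hyD⟩ := key_lim hue hss B hB hBb hcomp z x0 horb hstep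
    obtain ⟨h, hh⟩ := hy
    refine ⟨h, fun n => ?_⟩
    have h2 : (gs (n+1) • x0, h • x0) ∈ DD hue hss B hB n := by
      have h0 := hyD n
      rw [← hh] at h0
      exact h0
    have h3 := (DD_nice hue hss B hB n).2.1 (gs (n+1))⁻¹ _ _ h2
    have h4 : (x0, ((gs (n+1))⁻¹ * h) • x0) ∈ DD hue hss B hB n := by
      simpa [mul_smul] using h3
    have h5 : (gs (n+1))⁻¹ * h ∈ NN hue hss B hB n := mem_NN hue hss B hB h4
    have h6 : (gs n)⁻¹ * gs (n+1) ∈ NN hue hss B hB n := hgs n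
    have := (NN hue hss B hB n).mul_mem h6 h5
    simpa [mul_assoc] using this

/-! ### The inverse sequence of groups -/

instance NN_normal (n : ℕ) : (NN hue hss B hB n).Normal :=
  Subgroup.normalClosure_normal

/-- The bonding homomorphisms of the inverse sequence of groups. -/
noncomputable def ψs (n : ℕ) :
    (G ⧸ NN hue hss B hB (n+1)) →* (G ⧸ NN hue hss B hB n) :=
  QuotientGroup.map _ _ (MonoidHom.id G) (fun g hg => NN_succ_le hue hss B hB n hg)

theorem ψs_mk (n : ℕ) (g : G) :
    ψs hue hss B hB n (QuotientGroup.mk g) = QuotientGroup.mk g := rfl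

theorem ψs_surj (n : ℕ) : Function.Surjective (ψs hue hss B hB n) := by
  intro q
  induction q using Quotient.inductionOn' with
  | h g => exact ⟨QuotientGroup.mk g, rfl⟩

/-- The canonical homomorphism from `G` to the inverse limit. -/
noncomputable def toLimG : G →* ↥(seqLimG (Gs := fun n => G ⧸ NN hue hss B hB n) (ψs hue hss B hB)) where
  toFun g := ⟨fun n => QuotientGroup.mk g, fun n => rfl⟩
  map_one' := rfl
  map_mul' g h := rfl

theorem toLimG_bij [T0Space X] (hBb : ∀ E ∈ uniformity X, ∃ n, B n ⊆ E)
    (hfaith : FaithfulAction G X)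
    (hcomp : ∀ x : X, IsComplete (MulAction.orbit G x)) :
    Function.Bijective (toLimG hue hss B hB) := by
  constructor
  · rw [injective_iff_map_eq_one]
    intro g hg
    have hco : ∀ n : ℕ, (QuotientGroup.mk g : G ⧸ NN hue hss B hB n) = 1 := by
      intro n
      exact congrArg
        (fun u : ↥(seqLimG (Gs := fun n => G ⧸ NN hue hss B hB n) (ψs hue hss B hB)) =>
          (u : ∀ i, G ⧸ NN hue hss B hB i) n) hg
    have hmem : ∀ n, g ∈ NN hue hss B hB n :=
      fun n => (QuotientGroup.eq_one_iff g).1 (hco n)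
    have hfix : ∀ x : X, g • x = x := by
      intro x
      refine (eq_of_DD hue hss B hB hBb (fun n => ?_)).symm
      exact NN_move hue hss B hB (hmem (n+1)) x
    exact hfaith g hfix
  · intro u
    set gs : ℕ → G := fun n => Quotient.out (u.1 n) with hgsdef
    have hmk : ∀ n, (QuotientGroup.mk (gs n) : G ⧸ NN hue hss B hB n) = u.1 n :=
      fun n => QuotientGroup.out_eq' (u.1 n)
    have hgs : ∀ n, (gs n)⁻¹ * gs (n+1) ∈ NN hue hss B hB n := by
      intro n
      have h1 : (QuotientGroup.mk (gs (n+1)) : G ⧸ NN hue hss B hB n)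
          = QuotientGroup.mk (gs n) := by
        have h0 := u.2 n
        rw [← hmk (n+1), ψs_mk] at h0
        rw [hmk n]
        exact h0
      exact QuotientGroup.eq.1 h1.symm
    obtain ⟨h, hh⟩ := thread_rep hue hss B hB hBb hfaith hcomp gs hgs
    refine ⟨h, ?_⟩
    apply Subtype.ext
    funext n
    show (QuotientGroup.mk h : G ⧸ NN hue hss B hB n) = u.1 n
    rw [← hmk n]
    exact (QuotientGroup.eq.2 (hh n)).symm

/-! ### Mittag-Leffler and lim¹ for surjective systems -/

theorem seqComp_surj {A : ℕ → Type*} (φ : ∀ i, A (i+1) → A i)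
    (h : ∀ i, Function.Surjective (φ i)) (n : ℕ) :
    ∀ k, Function.Surjective (seqComp φ n k)
  | 0 => Function.surjective_id
  | (k+1) => by
    show Function.Surjective (fun a => seqComp φ n k (φ (n + k) a))
    exact (seqComp_surj φ h n k).comp (h (n+k))

theorem seqCompLE_surj {A : ℕ → Type*} (φ : ∀ i, A (i+1) → A i)
    (h : ∀ i, Function.Surjective (φ i)) {n m : ℕ} (hnm : n ≤ m) :
    Function.Surjective (seqCompLE φ hnm) := by
  refine (seqComp_surj φ h n (m - n)).comp ?_
  intro a
  exact ⟨cast (congrArg A (Nat.add_sub_cancel' hnm)) a, by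
    simp⟩

theorem ml_of_surj {A : ℕ → Type*} (φ : ∀ i, A (i+1) → A i)
    (h : ∀ i, Function.Surjective (φ i)) : SeqMittagLeffler φ := by
  intro n
  refine ⟨n, le_refl n, fun k hk => ?_⟩
  rw [Set.range_eq_univ.2 (seqCompLE_surj φ h _), Set.range_eq_univ.2 (seqCompLE_surj φ h _)]

noncomputable def lim1seq {Gs : ℕ → Type*} [∀ i, Group (Gs i)]
    (ψ : ∀ i, Gs (i+1) →* Gs i) (hs : ∀ i, Function.Surjective (ψ i))
    (t : ∀ i, Gs i) : ∀ n, Gs n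
  | 0 => 1
  | n+1 => (hs n ((t n)⁻¹ * lim1seq ψ hs t n)).choose

theorem lim1seq_spec {Gs : ℕ → Type*} [∀ i, Group (Gs i)]
    (ψ : ∀ i, Gs (i+1) →* Gs i) (hs : ∀ i, Function.Surjective (ψ i))
    (t : ∀ i, Gs i) (n : ℕ) :
    ψ n (lim1seq ψ hs t (n+1)) = (t n)⁻¹ * lim1seq ψ hs t n :=
  (hs n ((t n)⁻¹ * lim1seq ψ hs t n)).choose_spec

theorem lim1_of_surj {Gs : ℕ → Type*} [∀ i, Group (Gs i)]
    (ψ : ∀ i, Gs (i+1) →* Gs i) (hs : ∀ i, Function.Surjective (ψ i)) :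
    Lim1Trivial ψ := by
  intro t
  refine ⟨lim1seq ψ hs t, ?_⟩
  funext i
  show lim1seq ψ hs t i * (ψ i (lim1seq ψ hs t (i+1)))⁻¹ = t i
  rw [lim1seq_spec ψ hs t i]
  group

/-! ### The inverse sequence of orbit spaces -/

/-- The bonding maps of the inverse sequence of orbit spaces. -/
def φs (n : ℕ) : orbQuot (X := X) (NN hue hss B hB (n+1)) → orbQuot (X := X) (NN hue hss B hB n) :=
  qdrop (NN_succ_le hue hss B hB n)

/-- The canonical map from `X` to the inverse limit of the orbit spaces. -/
def εmap (x : X) :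
    seqLim (A := fun n => orbQuot (X := X) (NN hue hss B hB n)) (φs hue hss B hB) :=
  ⟨fun n => qmap (NN hue hss B hB n) x, fun n => rfl⟩

theorem εmap_inj [T0Space X] (hBb : ∀ E ∈ uniformity X, ∃ n, B n ⊆ E) :
    Function.Injective (εmap hue hss B hB) := by
  intro x y h
  refine eq_of_DD hue hss B hB hBb (fun n => ?_)
  have hco : qmap (NN hue hss B hB (n+1)) x = qmap (NN hue hss B hB (n+1)) y :=
    congrArg (fun a : seqLim (A := fun n => orbQuot (X := X) (NN hue hss B hB n))
      (φs hue hss B hB) => a.1 (n+1)) h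
  obtain ⟨m, hm⟩ := qmap_eq.1 hco
  have h1 : (y, (m : G) • y) ∈ DD hue hss B hB n := NN_move hue hss B hB m.2 y
  rw [hm] at h1
  exact (DD_nice hue hss B hB n).2.2.2 _ h1

theorem εmap_surj (hBb : ∀ E ∈ uniformity X, ∃ n, B n ⊆ E)
    (hcomp : ∀ x : X, IsComplete (MulAction.orbit G x)) :
    Function.Surjective (εmap hue hss B hB) := by
  intro a
  set xs : ℕ → X := fun n => Quotient.out (a.1 n) with hxs
  have hout : ∀ n, qmap (NN hue hss B hB n) (xs n) = a.1 n := fun n => Quotient.out_eq' _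
  have hrel : ∀ n, qmap (NN hue hss B hB n) (xs (n+1)) = qmap (NN hue hss B hB n) (xs n) := by
    intro n
    calc qmap (NN hue hss B hB n) (xs (n+1))
        = φs hue hss B hB n (qmap (NN hue hss B hB (n+1)) (xs (n+1))) := rfl
      _ = φs hue hss B hB n (a.1 (n+1)) := by rw [hout (n+1)]
      _ = a.1 n := a.2 n
      _ = qmap (NN hue hss B hB n) (xs n) := (hout n).symm
  choose ms hms using fun n => qmap_eq.1 (hrel n)
  have horb : ∀ n, xs n ∈ MulAction.orbit G (xs 0) := by
    intro n
    induction n with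
    | zero => exact MulAction.mem_orbit_self _
    | succ n ih =>
      rw [MulAction.mem_orbit_iff] at ih ⊢
      obtain ⟨g0, hg0⟩ := ih
      exact ⟨(ms n : G) * g0, by rw [mul_smul, hg0, hms n]⟩
  have hP : ∀ k n, (xs (n+2), xs (n+2+k)) ∈ DD hue hss B hB n := by
    intro k
    induction k with
    | zero => exact fun n => refl_mem_uniformity (DD_mem hue hss B hB n)
    | succ k ih =>
      intro n
      have h1 : (xs (n+2), xs (n+3)) ∈ DD hue hss B hB (n+1) := by
        have h0 := NN_move hue hss B hB (ms (n+2)).2 (xs (n+2))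
        rw [hms (n+2)] at h0
        exact h0
      have h2 : (xs (n+3), xs (n+3+k)) ∈ DD hue hss B hB (n+1) := ih (n+1)
      have h3 : (xs (n+2), xs (n+3+k)) ∈ DD hue hss B hB n :=
        DD_comp hue hss B hB n ⟨xs (n+3), h1, h2⟩
      have harith : n+2+(k+1) = n+3+k := by omega
      rw [harith]
      exact h3
  have hstep : ∀ n m, n ≤ m → ((fun n => xs (n+2)) n, (fun n => xs (n+2)) m)
      ∈ DD hue hss B hB n := by
    intro n m h
    obtain ⟨k, rfl⟩ := Nat.exists_eq_add_of_le h
    have harith : n + k + 2 = n + 2 + k := by omega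
    show (xs (n+2), xs (n+k+2)) ∈ DD hue hss B hB n
    rw [harith]
    exact hP k n
  obtain ⟨y, hy, hyD⟩ := key_lim hue hss B hB hBb hcomp (fun n => xs (n+2)) (xs 0)
    (fun n => horb (n+2)) hstep
  have hlow : ∀ n k, qmap (NN hue hss B hB n) (xs (n+k)) = a.1 n := by
    intro n k
    induction k with
    | zero => exact hout n
    | succ k ih =>
      have hq : qmap (NN hue hss B hB n) (xs (n+k+1)) = qmap (NN hue hss B hB n) (xs (n+k)) := by
        rw [← hms (n+k)]
        exact qmap_smul_eq ⟨(ms (n+k) : G),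
          NN_antitone hue hss B hB (Nat.le_add_right n k) (ms (n+k)).2⟩ _
      show qmap (NN hue hss B hB n) (xs (n+k+1)) = a.1 n
      rw [hq, ih]
  refine ⟨y, ?_⟩
  apply Subtype.ext
  funext n
  show qmap (NN hue hss B hB n) y = a.1 n
  obtain ⟨gy, hgy⟩ := (MulAction.mem_orbit_iff).1 hy
  obtain ⟨gn, hgn⟩ := (MulAction.mem_orbit_iff).1 (horb (n+2))
  have hcomb : (gy * gn⁻¹) • xs (n+2) = y := by
    have h4 : (gy * gn⁻¹) • xs (n+2) = gy • xs 0 := by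
      rw [← hgn, ← mul_smul]
      congr 1
      group
    rw [h4, hgy]
  have hmemD : (xs (n+2), (gy * gn⁻¹) • xs (n+2)) ∈ DD hue hss B hB n := by
    rw [hcomb]
    exact hyD n
  have hgN : gy * gn⁻¹ ∈ NN hue hss B hB n := mem_NN hue hss B hB hmemD
  have h5 : qmap (NN hue hss B hB n) y = qmap (NN hue hss B hB n) (xs (n+2)) := by
    rw [← hcomb]
    exact qmap_smul_eq ⟨_, hgN⟩ _
  rw [h5, hlow n 2]

/-! ### The forward construction -/

theorem forward {G : Type u} [Group G] {X : Type v} [UniformSpace X] [MulAction G X]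
    [T2Space X] [(uniformity X).IsCountablyGenerated]
    (hfaith : FaithfulAction G X) (hue : UnifEquicont G X)
    (hss : SmallScaleBoundedOrbits G X)
    (hcomp : ∀ x : X, IsComplete (MulAction.orbit G x)) :
    Nonempty (ActionSeqData G X) := by
  obtain ⟨B, hBab⟩ := Filter.exists_antitone_basis (uniformity X)
  have hB : ∀ n, B n ∈ uniformity X := fun n => hBab.toHasBasis.mem_of_mem trivial
  have hBb : ∀ E ∈ uniformity X, ∃ n, B n ⊆ E := by
    intro E hE
    obtain ⟨n, -, hn⟩ := hBab.toHasBasis.mem_iff.1 hE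
    exact ⟨n, hn⟩
  letI instX : ∀ n, UniformSpace (orbQuot (X := X) (NN hue hss B hB n)) :=
    fun n => orbUS hue (NN hue hss B hB n)
  letI instA : ∀ n, MulAction (G ⧸ NN hue hss B hB n) (orbQuot (X := X) (NN hue hss B hB n)) :=
    fun n => orbAction (NN hue hss B hB n)
  have hUCε : UniformContinuous (εmap hue hss B hB) := by
    apply UniformContinuous.subtype_mk
    rw [uniformContinuous_pi]
    intro n
    exact Filter.tendsto_map
  have hbij : Function.Bijective (εmap hue hss B hB) :=
    ⟨εmap_inj hue hss B hB hBb, εmap_surj hue hss B hB hBb hcomp⟩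
  set e : X ≃ (seqLim (A := fun n => orbQuot (X := X) (NN hue hss B hB n)) (φs hue hss B hB)) :=
    Equiv.ofBijective _ hbij with he
  have hUCinv : UniformContinuous e.symm := by
    rw [uniformContinuous_def]
    intro s hs
    obtain ⟨n, hn⟩ := DD_basis hue hss B hB hBb s hs
    have hc : UniformContinuous
        (fun a : seqLim (A := fun n => orbQuot (X := X) (NN hue hss B hB n)) (φs hue hss B hB)
          => a.1 (n+2)) :=
      (Pi.uniformContinuous_proj _ (n+2)).comp uniformContinuous_subtype_val
    have hW : {p : (seqLim (A := fun n => orbQuot (X := X) (NN hue hss B hB n))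
          (φs hue hss B hB)) × _ |
        (p.1.1 (n+2), p.2.1 (n+2)) ∈ Prod.map (qmap (NN hue hss B hB (n+2)))
          (qmap (NN hue hss B hB (n+2))) '' (DD hue hss B hB (n+2))} ∈
        uniformity (seqLim (A := fun n => orbQuot (X := X) (NN hue hss B hB n))
          (φs hue hss B hB)) := by
      have := hc (image_mem_orbUnif hue (NN hue hss B hB (n+2)) (DD_mem hue hss B hB (n+2)))
      exact Filter.mem_map.1 this
    refine Filter.mem_of_superset hW ?_
    rintro ⟨a, b⟩ hab
    set x := e.symm a with hx
    set y := e.symm b with hy2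
    have hax : a = εmap hue hss B hB x := (e.apply_symm_apply a).symm
    have hby : b = εmap hue hss B hB y := (e.apply_symm_apply b).symm
    have hab2 : (qmap (NN hue hss B hB (n+2)) x, qmap (NN hue hss B hB (n+2)) y)
        ∈ Prod.map (qmap (NN hue hss B hB (n+2))) (qmap (NN hue hss B hB (n+2)))
          '' (DD hue hss B hB (n+2)) := by
      have := hab
      rw [hax, hby] at this
      exact this
    obtain ⟨⟨uu, vv⟩, huv, heq⟩ := hab2
    simp only [Prod.map, Prod.mk.injEq] at heq
    obtain ⟨m, hm⟩ := qmap_eq.1 heq.1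
    obtain ⟨k, hk⟩ := qmap_eq.1 heq.2
    have h1 : (x, ((m : G)⁻¹ * (k : G)) • y) ∈ DD hue hss B hB (n+2) := by
      have := (DD_nice hue hss B hB (n+2)).2.1 (m : G)⁻¹ uu vv huv
      rw [← hm, ← hk] at this
      simpa [mul_smul] using this
    have h2 : (((m : G)⁻¹ * (k : G)) • y, y) ∈ DD hue hss B hB (n+1) := by
      have hmem : (m : G)⁻¹ * (k : G) ∈ NN hue hss B hB (n+2) :=
        (NN hue hss B hB (n+2)).mul_mem ((NN hue hss B hB (n+2)).inv_mem m.2) k.2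
      exact (DD_nice hue hss B hB (n+1)).2.2.2 _ (NN_move hue hss B hB hmem y)
    have h3 : (x, y) ∈ DD hue hss B hB n :=
      DD_comp hue hss B hB n ⟨((m : G)⁻¹ * (k : G)) • y,
        DD_antitone hue hss B hB (Nat.le_succ (n+1)) h1, h2⟩
    exact hn h3
  refine ⟨{ Gs := fun n => G ⧸ NN hue hss B hB n,
            ψ := ψs hue hss B hB,
            Xs := fun n => orbQuot (X := X) (NN hue hss B hB n),
            instX := instX,
            φ := φs hue hss B hB,
            φuc := fun n => qdrop_uc hue _,
            instA := instA,
            compat := fun n gq xq =>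
              qdrop_smul (NN_succ_le hue hss B hB n)
                (fun g hg => NN_succ_le hue hss B hB n hg) gq xq,
            ml := ml_of_surj _ (ψs_surj hue hss B hB),
            lim1 := lim1_of_surj _ (ψs_surj hue hss B hB),
            upd := fun n => upd_level hue (DD_nice hue hss B hB n) (NN hue hss B hB n)
              (fun g x h => mem_NN hue hss B hB h),
            neutral := fun n => neutral_level hue (NN hue hss B hB n),
            eG := MulEquiv.ofBijective (toLimG hue hss B hB)
              (toLimG_bij hue hss B hB hBb hfaith hcomp),
            eX := ⟨e, hUCε, hUCinv⟩,
            equivariant := fun g x i => rfl }⟩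

/-! ### The backward direction -/

theorem lim_basis {G : Type u} [Group G] {X : Type v} [UniformSpace X] [MulAction G X]
    (d : ActionSeqData G X) :
    letI := d.instX
    ∀ T ∈ uniformity (seqLim d.φ), ∃ n, ∃ S ∈ uniformity (d.Xs n),
      {p : seqLim d.φ × seqLim d.φ | (p.1.1 n, p.2.1 n) ∈ S} ⊆ T := by
  letI := d.instX
  have huni : uniformity (seqLim d.φ)
      = ⨅ n, Filter.comap (fun p : seqLim d.φ × seqLim d.φ => (p.1.1 n, p.2.1 n))
          (uniformity (d.Xs n)) := by
    rw [uniformity_subtype, Pi.uniformity, Filter.comap_iInf]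
    simp only [Filter.comap_comap]
    rfl
  have hanti : ∀ n, Filter.comap (fun p : seqLim d.φ × seqLim d.φ => (p.1.1 (n+1), p.2.1 (n+1)))
      (uniformity (d.Xs (n+1)))
      ≤ Filter.comap (fun p : seqLim d.φ × seqLim d.φ => (p.1.1 n, p.2.1 n))
        (uniformity (d.Xs n)) := by
    intro n
    have hfn : (fun p : seqLim d.φ × seqLim d.φ => (p.1.1 n, p.2.1 n))
        = (Prod.map (d.φ n) (d.φ n)) ∘
          (fun p : seqLim d.φ × seqLim d.φ => (p.1.1 (n+1), p.2.1 (n+1))) := by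
      funext p
      have h1 := p.1.2 n
      have h2 := p.2.2 n
      simp only [Function.comp, Prod.map]
      rw [h1, h2]
    rw [hfn, ← Filter.comap_comap]
    exact Filter.comap_mono (Filter.tendsto_iff_comap.1 (d.φuc n))
  have hmono : ∀ n m, n ≤ m →
      Filter.comap (fun p : seqLim d.φ × seqLim d.φ => (p.1.1 m, p.2.1 m))
        (uniformity (d.Xs m))
      ≤ Filter.comap (fun p : seqLim d.φ × seqLim d.φ => (p.1.1 n, p.2.1 n))
        (uniformity (d.Xs n)) := by
    intro n m h
    induction m, h using Nat.le_induction with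
    | base => exact le_rfl
    | succ m hm ih => exact le_trans (hanti m) ih
  have hdir : Directed (· ≥ ·)
      (fun n => Filter.comap (fun p : seqLim d.φ × seqLim d.φ => (p.1.1 n, p.2.1 n))
        (uniformity (d.Xs n))) := by
    intro a b
    exact ⟨max a b, hmono a (max a b) (le_max_left a b), hmono b (max a b) (le_max_right a b)⟩
  intro T hT
  rw [huni] at hT
  obtain ⟨n, hn⟩ := (Filter.mem_iInf_of_directed hdir T).1 hT
  obtain ⟨S, hS, hsub⟩ := Filter.mem_comap.1 hn
  exact ⟨n, S, hS, hsub⟩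

theorem backward_ssbo {G : Type u} [Group G] {X : Type v} [UniformSpace X] [MulAction G X]
    (d : ActionSeqData G X) : SmallScaleBoundedOrbits G X := by
  letI := d.instG
  letI := d.instX
  letI := d.instA
  intro E hE
  have hE'' : {p : seqLim d.φ × seqLim d.φ | (d.eX.symm p.1, d.eX.symm p.2) ∈ E}
      ∈ uniformity (seqLim d.φ) :=
    (uniformContinuous_def.1 d.eX.symm.uniformContinuous) E hE
  obtain ⟨n, S, hS, hsub⟩ := lim_basis d _ hE''
  obtain ⟨E₀, hE₀, hdisc⟩ := d.upd n
  set π : G →* d.Gs n :=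
    (Pi.evalMonoidHom d.Gs n).comp ((seqLimG d.ψ).subtype.comp d.eG.toMonoidHom) with hπ
  have hF : {p : X × X | ((d.eX p.1).1 n, (d.eX p.2).1 n) ∈ E₀} ∈ uniformity X := by
    have hc : UniformContinuous (fun x : X => (d.eX x).1 n) :=
      ((Pi.uniformContinuous_proj _ n).comp uniformContinuous_subtype_val).comp
        d.eX.uniformContinuous
    exact (uniformContinuous_def.1 hc) E₀ hE₀
  refine ⟨_, hF, ?_⟩
  intro g hg x
  have hle : subgroupEnt G X {p : X × X | ((d.eX p.1).1 n, (d.eX p.2).1 n) ∈ E₀} ≤ π.ker := by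
    rw [subgroupEnt]
    refine (Subgroup.closure_le _).2 ?_
    rintro g' ⟨x', hx'⟩
    have hco : (d.eX (g' • x')).1 n = π g' • (d.eX x').1 n := d.equivariant g' x' n
    simp only [Set.mem_setOf_eq] at hx'
    rw [hco] at hx'
    exact MonoidHom.mem_ker.2 (hdisc (π g') _ hx')
  have hg1 : π g = 1 := MonoidHom.mem_ker.1 (hle hg)
  have hcoord : (d.eX (g • x)).1 n = (d.eX x).1 n := by
    rw [d.equivariant g x n]
    show π g • _ = _
    rw [hg1, one_smul]
  have hmem : (d.eX x, d.eX (g • x))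
      ∈ {p : seqLim d.φ × seqLim d.φ | (p.1.1 n, p.2.1 n) ∈ S} := by
    show ((d.eX x).1 n, (d.eX (g • x)).1 n) ∈ S
    rw [hcoord]
    exact refl_mem_uniformity hS
  have := hsub hmem
  simpa [d.eX.symm_apply_apply] using this

theorem backward_complete {G : Type u} [Group G] {X : Type v} [UniformSpace X] [MulAction G X]
    (d : ActionSeqData G X) (x : X) : IsComplete (MulAction.orbit G x) := by
  letI := d.instG
  letI := d.instX
  letI := d.instA
  intro f hf hle
  haveI hNB : f.NeBot := hf.1
  set π : ∀ n, G →* d.Gs n := fun n =>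
    (Pi.evalMonoidHom d.Gs n).comp ((seqLimG d.ψ).subtype.comp d.eG.toMonoidHom) with hπ
  choose E0 hE0 hdisc using fun n => d.upd n
  have hfree : ∀ n (k : d.Gs n) (z : d.Xs n), k • z = z → k = 1 := by
    intro n k z hk
    apply hdisc n k z
    rw [hk]
    exact refl_mem_uniformity (hE0 n)
  have hFn : ∀ n, {p : X × X | ((d.eX p.1).1 n, (d.eX p.2).1 n) ∈ E0 n} ∈ uniformity X := by
    intro n
    have hc : UniformContinuous (fun x : X => (d.eX x).1 n) :=
      ((Pi.uniformContinuous_proj _ n).comp uniformContinuous_subtype_val).comp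
        d.eX.uniformContinuous
    exact (uniformContinuous_def.1 hc) (E0 n) (hE0 n)
  choose A' hA'f hA'sub using fun n => (cauchy_iff.1 hf).2 _ (hFn n)
  set A : ℕ → Set X := fun n => (⋂ k ∈ Finset.range (n+1), A' k) ∩ MulAction.orbit G x with hA
  have hAf : ∀ n, A n ∈ f := by
    intro n
    refine Filter.inter_mem ?_ (Filter.le_principal_iff.1 hle)
    exact (Filter.biInter_finset_mem _).2 (fun k _ => hA'f k)
  have hAorb : ∀ n, A n ⊆ MulAction.orbit G x := fun n => Set.inter_subset_right
  have hAA' : ∀ n, A n ⊆ A' n := fun n =>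
    le_trans Set.inter_subset_left (Set.biInter_subset_of_mem (Finset.self_mem_range_succ n))
  have hAmono : ∀ n m, n ≤ m → A m ⊆ A n := by
    intro n m h
    apply Set.inter_subset_inter_left
    intro z hz
    simp only [Set.mem_iInter] at hz ⊢
    intro k hk
    exact hz k (Finset.mem_range_succ_iff.2 (le_trans (Finset.mem_range_succ_iff.1 hk) h))
  choose y hy using fun n => Filter.nonempty_of_mem (hAf n)
  choose gg hgg using fun n => (MulAction.mem_orbit_iff).1 (hAorb n (hy n))
  set ξ : ∀ n, d.Xs n := fun n => (d.eX (y n)).1 n with hξ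
  have hconst : ∀ n, ∀ z ∈ A n, (d.eX z).1 n = ξ n := by
    intro n z hz
    have hp : ((d.eX (y n)).1 n, (d.eX z).1 n) ∈ E0 n :=
      hA'sub n (Set.mk_mem_prod (hAA' n (hy n)) (hAA' n hz))
    obtain ⟨hzg, hhz⟩ := (MulAction.mem_orbit_iff).1 (hAorb n hz)
    have e1 : (d.eX z).1 n = π n hzg • (d.eX x).1 n := by
      rw [← hhz]
      exact d.equivariant hzg x n
    have e2 : (d.eX (y n)).1 n = π n (gg n) • (d.eX x).1 n := by
      rw [← hgg n]
      exact d.equivariant _ x n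
    have e3 : π n hzg • (d.eX x).1 n
        = (π n hzg * (π n (gg n))⁻¹) • (π n (gg n) • (d.eX x).1 n) := by
      rw [smul_smul]
      congr 1
      group
    have hk1 : π n hzg * (π n (gg n))⁻¹ = 1 := by
      apply hdisc n _ (π n (gg n) • (d.eX x).1 n)
      rw [← e3, ← e1, ← e2]
      exact hp
    have hpe : π n hzg = π n (gg n) := mul_inv_eq_one.1 hk1
    rw [e1, hpe, ← e2]
  have hthread : ∀ n, d.φ n (ξ (n+1)) = ξ n := by
    intro n
    have h1 : (d.eX (y (n+1))).1 n = ξ n :=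
      hconst n _ (hAmono n (n+1) (Nat.le_succ n) (hy (n+1)))
    have h2 := (d.eX (y (n+1))).2 n
    calc d.φ n (ξ (n+1)) = (d.eX (y (n+1))).1 n := h2
      _ = ξ n := h1
  set u : ∀ n, d.Gs n := fun n => π n (gg n) with hu0
  have hu : ∀ n, u n • (d.eX x).1 n = ξ n := by
    intro n
    have := d.equivariant (gg n) x n
    rw [hgg n] at this
    exact this.symm
  have huthread : ∀ n, d.ψ n (u (n+1)) = u n := by
    intro n
    have h1 : d.ψ n (u (n+1)) • (d.eX x).1 n = u n • (d.eX x).1 n := by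
      calc d.ψ n (u (n+1)) • (d.eX x).1 n
          = d.ψ n (u (n+1)) • d.φ n ((d.eX x).1 (n+1)) := by rw [(d.eX x).2 n]
        _ = d.φ n (u (n+1) • (d.eX x).1 (n+1)) := (d.compat n _ _).symm
        _ = d.φ n (ξ (n+1)) := by rw [hu (n+1)]
        _ = ξ n := hthread n
        _ = u n • (d.eX x).1 n := (hu n).symm
    have hk : (d.ψ n (u (n+1)) * (u n)⁻¹) • (u n • (d.eX x).1 n) = u n • (d.eX x).1 n := by
      rw [smul_smul]
      have : d.ψ n (u (n+1)) * (u n)⁻¹ * u n = d.ψ n (u (n+1)) := by group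
      rw [this]
      exact h1
    exact mul_inv_eq_one.1 (hfree n _ _ hk)
  set uu : ↥(seqLimG d.ψ) := ⟨u, huthread⟩ with huu
  set g0 : G := d.eG.symm uu with hg00
  have hg0 : ∀ n, (d.eG g0 : ∀ j, d.Gs j) n = u n := by
    intro n
    rw [hg00, MulEquiv.apply_symm_apply]
  have hgx : d.eX (g0 • x) = ⟨ξ, hthread⟩ := by
    apply Subtype.ext
    funext n
    show (d.eX (g0 • x)).1 n = ξ n
    rw [d.equivariant g0 x n, hg0 n, hu n]
  refine ⟨g0 • x, ⟨g0, rfl⟩, ?_⟩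
  have htend : Filter.Tendsto (fun w => d.eX w) f (nhds (d.eX (g0 • x))) := by
    rw [hgx, tendsto_subtype_rng, tendsto_pi_nhds]
    intro n
    refine Filter.Tendsto.congr' ?_ tendsto_const_nhds
    have hev : ∀ᶠ w in f, (d.eX w).1 n = ξ n :=
      Filter.mem_of_superset (hAf n) (fun z hz => hconst n z hz)
    exact hev.mono fun w hw => hw.symm
  have hcomp2 : Filter.Tendsto (fun w => d.eX.symm (d.eX w)) f
      (nhds (d.eX.symm (d.eX (g0 • x)))) :=
    (d.eX.symm.continuous.tendsto _).comp htend
  rw [d.eX.symm_apply_apply] at hcomp2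
  exact hcomp2.congr fun w => d.eX.symm_apply_apply w

end ASD


/-- Suppose `G` acts faithfully and uniformly equicontinuously on a metrizable
uniform space `X`.  Then the action has small scale bounded orbits and the
orbit map `X → X/G` has complete fibers (every orbit is complete) if and only
if the action is (equivariantly uniformly equivalent to) the inverse limit of
uniformly properly discontinuous and neutral compatible actions along a
Mittag-Leffler inverse sequence of groups with trivial `lim¹`. -/


theorem smallScaleBoundedOrbits_completeFibers_iff_actionSeqData
    {G : Type u} [Group G] {X : Type v} [UniformSpace X] [MulAction G X]
    [T2Space X] [(uniformity X).IsCountablyGenerated]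
    (hfaith : FaithfulAction G X) (hue : UnifEquicont G X) :
    (SmallScaleBoundedOrbits G X ∧
        ∀ x : X, IsComplete (MulAction.orbit G x)) ↔
      Nonempty (ActionSeqData G X) := by
  constructor
  · rintro ⟨hss, hcomp⟩
    exact ASD.forward hfaith hue hss hcomp
  · rintro ⟨d⟩
    exact ⟨ASD.backward_ssbo d, fun x => ASD.backward_complete d x⟩
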